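/- Let K be a field and M an N×N matrix over K. If the kernel and the image of the linear map v ↦ M·v intersect trivially (their intersection is the zero submodule), then the multiplicity of 0 as a root of the characteristic polynomial of M equals the dimension of the kernel of M. -/

import Mathlib

open Matrix Polynomial

/-- If the kernel and the image of a square matrix `M` intersect trivially, then the
multiplicity of `0` as a root of the characteristic polynomial of `M` equals the
dimension of the kernel of `M`. -/
theorem rootMultiplicity_charpoly_eq_finrank_ker (K : Type*) [Field K] (N : ℕ)
    (M : Matrix (Fin N) (Fin N) K)
    (h : LinearMap.ker M.mulVecLin ⊓ LinearMap.range M.mulVecLin = ⊥) :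
    Polynomial.rootMultiplicity 0 M.charpoly =
      Module.finrank K (LinearMap.ker M.mulVecLin) := by
  set φ : Module.End K (Fin N → K) := M.mulVecLin with hφ
  have hM : LinearMap.toMatrix (Pi.basisFun K (Fin N)) (Pi.basisFun K (Fin N)) φ = M := by
    rw [LinearMap.toMatrix_eq_toMatrix', hφ, ← Matrix.toLin'_apply']
    exact LinearMap.toMatrix'.apply_symm_apply M
  have hchar : M.charpoly = φ.charpoly := by
    rw [← hM]; exact LinearMap.charpoly_toMatrix φ _
  -- kernels of powers stabilize at ker φ
  have hker : ∀ n, LinearMap.ker (φ ^ n) ≤ LinearMap.ker φ := by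
    intro n
    induction n with
    | zero =>
      intro x hx
      simp only [pow_zero, LinearMap.mem_ker, Module.End.one_apply] at hx
      simp [hx]
    | succ n ih =>
      intro x hx
      have hx' : φ x ∈ LinearMap.ker (φ ^ n) := by
        simpa [pow_succ] using hx
      have h1 : φ x ∈ LinearMap.ker φ := ih hx'
      rcases Nat.eq_zero_or_pos n with rfl | hn
      · simpa using hx'
      have h2 : φ x ∈ LinearMap.ker φ ⊓ LinearMap.range φ :=
        ⟨h1, ⟨x, rfl⟩⟩
      rw [h] at h2
      simpa using h2
  have hmax : φ.maxGenEigenspace 0 = LinearMap.ker φ := by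
    apply le_antisymm
    · intro x hx
      rw [Module.End.mem_maxGenEigenspace] at hx
      obtain ⟨k, hk⟩ := hx
      simp only [zero_smul, sub_zero] at hk
      exact hker k hk
    · intro x hx
      rw [Module.End.mem_maxGenEigenspace]
      exact ⟨1, by simpa using hx⟩
  rw [hchar, rootMultiplicity_eq_natTrailingDegree',
    ← LinearMap.finrank_maxGenEigenspace_zero_eq, hmax]
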